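/- For every n ≥ 2: for each odd 1 ≤ i < n, the projection of the maelstrom word M_n to {x_i, x_{i+1}} equals x_{i+1} x_i x_{i+1} x_i; for each even 2 ≤ i < n, the projection to {x_i, x_{i+1}} equals x_i x_{i+1} x_i x_{i+1}; and for each 1 ≤ i < j ≤ n with j − i ≥ 2, the projection to {x_i, x_j} equals x_j x_i² x_j. -/

import Mathlib

/-- The maelstrom words: `M 1 = x₁²`; if `k` is odd and `M k = m · xₖ` then
`M (k+1) = x_{k+1} · m · x_{k+1} · xₖ`; if `k` is even and `M k = xₖ · m'` then
`M (k+1) = xₖ · x_{k+1} · m' · x_{k+1}`. -/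
def maelW : ℕ → List ℕ
  | 0 => []
  | 1 => [1, 1]
  | (k+2) =>
    if (k+1) % 2 = 1 then (k+2) :: ((maelW (k+1)).dropLast ++ [k+2, k+1])
    else (k+1) :: (k+2) :: ((maelW (k+1)).tail ++ [k+2])

/-- Projection of a word to the two variables `i`, `j` (deleting all other letters). -/
def proj2 (u : List ℕ) (i j : ℕ) : List ℕ := u.filter (fun a => a == i || a == j)

private lemma maelW_succ (n : ℕ) (hn : 1 ≤ n) :
    maelW (n+1) = if n % 2 = 1 then (n+1) :: ((maelW n).dropLast ++ [n+1, n])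
                  else n :: (n+1) :: ((maelW n).tail ++ [n+1]) := by
  obtain ⟨k, rfl⟩ : ∃ k, n = k+1 := ⟨n-1, by omega⟩
  rfl

private lemma proj2_cons (a : ℕ) (l : List ℕ) (i j : ℕ) :
    proj2 (a :: l) i j = (if a = i ∨ a = j then [a] else []) ++ proj2 l i j := by
  unfold proj2
  rw [List.filter_cons]
  by_cases h : a = i ∨ a = j
  · simp [h]
  · push_neg at h
    simp [h.1, h.2]

private lemma proj2_append (u v : List ℕ) (i j : ℕ) :
    proj2 (u ++ v) i j = proj2 u i j ++ proj2 v i j := List.filter_append _ _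

private lemma proj2_nil (i j : ℕ) : proj2 [] i j = [] := rfl

private lemma proj2_no_j (u : List ℕ) (i j : ℕ) (h : ∀ a ∈ u, a ≠ j) :
    proj2 u i j = List.replicate (u.count i) i := by
  unfold proj2
  rw [List.filter_congr (q := fun a => a == i) ?_]
  · simpa using (List.filter_beq (l := u) i)
  · intro a ha
    have : (a == j) = false := beq_eq_false_iff_ne.mpr (h a ha)
    simp [this]

private lemma maelW_good (n : ℕ) (hn : 2 ≤ n) :
    ((∀ i : ℕ, 1 ≤ i → i < n → Odd i → proj2 (maelW n) i (i+1) = [i+1, i, i+1, i]) ∧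
     (∀ i : ℕ, 2 ≤ i → i < n → Even i → proj2 (maelW n) i (i+1) = [i, i+1, i, i+1]) ∧
     (∀ i j : ℕ, 1 ≤ i → i < j → j ≤ n → 2 ≤ j - i → proj2 (maelW n) i j = [j, i, i, j])) ∧
    (∀ k : ℕ, 1 ≤ k → k ≤ n → (maelW n).count k = 2) ∧
    (∀ k ∈ maelW n, 1 ≤ k ∧ k ≤ n) ∧
    (n % 2 = 1 → ∃ w, maelW n = w ++ [n] ∧ w.count n = 1) ∧
    (n % 2 = 0 → ∃ w, maelW n = n :: w ∧ w.count n = 1) := by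
  induction n, hn using Nat.le_induction with
  | base =>
    have h2 : maelW 2 = [2,1,2,1] := rfl
    refine ⟨⟨?_, ?_, ?_⟩, ?_, ?_, ?_, ?_⟩
    · intro i h1 h2' _
      have : i = 1 := by omega
      subst this
      decide
    · intro i h1 h2' _; omega
    · intro i j h1 h2' h3 h4; omega
    · intro k h1 h2'
      have : k = 1 ∨ k = 2 := by omega
      rcases this with rfl | rfl <;> decide
    · decide
    · intro h; omega
    · intro _; exact ⟨[1,2,1], rfl, rfl⟩
  | succ n hn ih =>
    obtain ⟨⟨ihOdd, ihEven, ihFar⟩, ihCount, ihMem, ihEnd1, ihEnd0⟩ := ih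
    have hms := maelW_succ n (by omega)
    rcases Nat.mod_two_eq_zero_or_one n with hpar | hpar
    · -- n even : maelW n = n :: w, maelW (n+1) = n :: (n+1) :: (w ++ [n+1])
      obtain ⟨w, hw, hcw⟩ := ihEnd0 hpar
      have hM : maelW (n+1) = n :: (n+1) :: (w ++ [n+1]) := by
        rw [hms, if_neg (by omega), hw]; rfl
      have hwmem : ∀ a ∈ w, 1 ≤ a ∧ a ≤ n := fun a ha => ihMem a (by rw [hw]; exact List.mem_cons_of_mem _ ha)
      have hwcnt : ∀ k, 1 ≤ k → k < n → w.count k = 2 := by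
        intro k h1 h2
        have := ihCount k h1 (by omega)
        rw [hw, List.count_cons] at this
        simpa [show ¬ (n = k) by omega] using this
      have hnot : ∀ a ∈ w, a ≠ n + 1 := fun a ha => by have := hwmem a ha; omega
      have key : ∀ i j : ℕ, i ≤ n → j ≤ n → proj2 (maelW (n+1)) i j = proj2 (maelW n) i j := by
        intro i j hi hj
        rw [hM, hw, proj2_cons, proj2_cons, proj2_cons, proj2_append, proj2_cons, proj2_nil]
        simp [show ¬(n+1 = i ∨ n+1 = j) by omega]
      have newfar : ∀ i : ℕ, 1 ≤ i → i < n → proj2 (maelW (n+1)) i (n+1) = [n+1, i, i, n+1] := by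
        intro i h1 h2
        rw [hM, proj2_cons, proj2_cons, proj2_append, proj2_cons, proj2_nil,
          proj2_no_j w i (n+1) hnot, hwcnt i h1 h2]
        have hni : ¬ (n = i) := by omega
        simp [hni]
      have newadj : proj2 (maelW (n+1)) n (n+1) = [n, n+1, n, n+1] := by
        rw [hM, proj2_cons, proj2_cons, proj2_append, proj2_cons, proj2_nil,
          proj2_no_j w n (n+1) hnot, hcw]
        simp
      refine ⟨⟨?_, ?_, ?_⟩, ?_, ?_, ?_, ?_⟩
      · intro i h1 h2 hodd
        rcases Nat.lt_or_ge i n with h | h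
        · rw [key i (i+1) (by omega) (by omega)]; exact ihOdd i h1 h hodd
        · exfalso; have : i = n := by omega
          subst this; rw [Nat.odd_iff] at hodd; omega
      · intro i h1 h2 heven
        rcases Nat.lt_or_ge i n with h | h
        · rw [key i (i+1) (by omega) (by omega)]; exact ihEven i h1 h heven
        · have : i = n := by omega
          subst this; exact newadj
      · intro i j h1 h2 h3 h4
        rcases Nat.lt_or_ge j (n+1) with h | h
        · rw [key i j (by omega) (by omega)]; exact ihFar i j h1 h2 (by omega) h4
        · have : j = n + 1 := by omega
          subst this; exact newfar i h1 (by omega)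
      · intro k h1 h2
        rw [hM, List.count_cons, List.count_cons, List.count_append, List.count_cons, List.count_nil]
        rcases Nat.lt_or_ge k n with h | h
        · have := hwcnt k h1 h
          simp only [beq_iff_eq]
          rw [this]; split_ifs <;> omega
        · rcases (by omega : k = n ∨ k = n + 1) with rfl | rfl
          · simp only [beq_iff_eq]
            rw [hcw]; split_ifs <;> omega
          · have : w.count (n+1) = 0 := List.count_eq_zero.mpr (fun h => (hnot _ h) rfl)
            simp only [beq_iff_eq]
            rw [this]; split_ifs <;> omega
      · intro k hk
        rw [hM] at hk
        simp only [List.mem_cons, List.mem_append, List.not_mem_nil, or_false] at hk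
        rcases hk with rfl | rfl | hk | rfl
        · omega
        · omega
        · have := hwmem k hk; omega
        · omega
      · intro _
        refine ⟨n :: (n+1) :: w, by rw [hM]; simp, ?_⟩
        rw [List.count_cons, List.count_cons]
        have : w.count (n+1) = 0 := List.count_eq_zero.mpr (fun h => (hnot _ h) rfl)
        simp only [beq_iff_eq]
        rw [this]
        simp [show ¬ (n = n+1) by omega]
      · intro h; omega
    · -- n odd : maelW n = w ++ [n], maelW (n+1) = (n+1) :: (w ++ [n+1, n])
      obtain ⟨w, hw, hcw⟩ := ihEnd1 hpar
      have hM : maelW (n+1) = (n+1) :: (w ++ [n+1, n]) := by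
        rw [hms, if_pos hpar, hw, List.dropLast_concat]
      have hwmem : ∀ a ∈ w, 1 ≤ a ∧ a ≤ n := fun a ha => ihMem a (by rw [hw]; exact List.mem_append_left _ ha)
      have hwcnt : ∀ k, 1 ≤ k → k < n → w.count k = 2 := by
        intro k h1 h2
        have := ihCount k h1 (by omega)
        rw [hw, List.count_append, List.count_cons, List.count_nil] at this
        simpa [show ¬ (n = k) by omega] using this
      have hnot : ∀ a ∈ w, a ≠ n + 1 := fun a ha => by have := hwmem a ha; omega
      have key : ∀ i j : ℕ, i ≤ n → j ≤ n → proj2 (maelW (n+1)) i j = proj2 (maelW n) i j := by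
        intro i j hi hj
        rw [hM, hw, proj2_cons, proj2_append, proj2_cons, proj2_cons, proj2_nil,
          proj2_append, proj2_cons, proj2_nil]
        simp [show ¬(n+1 = i ∨ n+1 = j) by omega]
      have newfar : ∀ i : ℕ, 1 ≤ i → i < n → proj2 (maelW (n+1)) i (n+1) = [n+1, i, i, n+1] := by
        intro i h1 h2
        rw [hM, proj2_cons, proj2_append, proj2_cons, proj2_cons, proj2_nil,
          proj2_no_j w i (n+1) hnot, hwcnt i h1 h2]
        have hni : ¬ (n = i) := by omega
        simp [hni]
      have newadj : proj2 (maelW (n+1)) n (n+1) = [n+1, n, n+1, n] := by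
        rw [hM, proj2_cons, proj2_append, proj2_cons, proj2_cons, proj2_nil,
          proj2_no_j w n (n+1) hnot, hcw]
        simp
      refine ⟨⟨?_, ?_, ?_⟩, ?_, ?_, ?_, ?_⟩
      · intro i h1 h2 hodd
        rcases Nat.lt_or_ge i n with h | h
        · rw [key i (i+1) (by omega) (by omega)]; exact ihOdd i h1 h hodd
        · have : i = n := by omega
          subst this; exact newadj
      · intro i h1 h2 heven
        rcases Nat.lt_or_ge i n with h | h
        · rw [key i (i+1) (by omega) (by omega)]; exact ihEven i h1 h heven
        · exfalso; have : i = n := by omega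
          subst this; rw [Nat.even_iff] at heven; omega
      · intro i j h1 h2 h3 h4
        rcases Nat.lt_or_ge j (n+1) with h | h
        · rw [key i j (by omega) (by omega)]; exact ihFar i j h1 h2 (by omega) h4
        · have : j = n + 1 := by omega
          subst this; exact newfar i h1 (by omega)
      · intro k h1 h2
        rw [hM, List.count_cons, List.count_append, List.count_cons, List.count_cons, List.count_nil]
        rcases Nat.lt_or_ge k n with h | h
        · have := hwcnt k h1 h
          simp only [beq_iff_eq]
          rw [this]; split_ifs <;> omega
        · rcases (by omega : k = n ∨ k = n + 1) with rfl | rfl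
          · simp only [beq_iff_eq]
            rw [hcw]; split_ifs <;> omega
          · have : w.count (n+1) = 0 := List.count_eq_zero.mpr (fun h => (hnot _ h) rfl)
            simp only [beq_iff_eq]
            rw [this]; split_ifs <;> omega
      · intro k hk
        rw [hM] at hk
        simp only [List.mem_cons, List.mem_append, List.not_mem_nil, or_false] at hk
        rcases hk with rfl | hk | rfl | rfl
        · omega
        · have := hwmem k hk; omega
        · omega
        · omega
      · intro h; omega
      · intro _
        refine ⟨w ++ [n+1, n], by rw [hM], ?_⟩
        rw [List.count_append, List.count_cons, List.count_cons, List.count_nil]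
        have : w.count (n+1) = 0 := List.count_eq_zero.mpr (fun h => (hnot _ h) rfl)
        simp only [beq_iff_eq]
        rw [this]
        simp [show ¬ (n = n+1) by omega]


/-- For every `n ≥ 2`: for odd `1 ≤ i < n`, `M n[xᵢ,x_{i+1}] = x_{i+1} xᵢ x_{i+1} xᵢ`;
for even `2 ≤ i < n`, `M n[xᵢ,x_{i+1}] = xᵢ x_{i+1} xᵢ x_{i+1}`; and for
`1 ≤ i < j ≤ n` with `j - i ≥ 2`, `M n[xᵢ,xⱼ] = xⱼ xᵢ² xⱼ`. -/
theorem maelW_projections (n : ℕ) (hn : 2 ≤ n) :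
    (∀ i : ℕ, 1 ≤ i → i < n → Odd i → proj2 (maelW n) i (i+1) = [i+1, i, i+1, i]) ∧
    (∀ i : ℕ, 2 ≤ i → i < n → Even i → proj2 (maelW n) i (i+1) = [i, i+1, i, i+1]) ∧
    (∀ i j : ℕ, 1 ≤ i → i < j → j ≤ n → 2 ≤ j - i →
      proj2 (maelW n) i j = [j, i, i, j]) := by
  exact (maelW_good n hn).1
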